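/- Let G be a group with elements x_{ts} for n ≥ t > s ≥ 1 satisfying the Birman-Ko-Lee relations, and let δ = x_{n,n-1} x_{n-1,n-2} ... x_{2,1}. Then for all n ≥ t > s ≥ 1, x_{ts} δ = δ x_{t+1, s+1}, where indices are taken modulo n (i.e., if t = n then x_{t+1,s+1} is interpreted as x_{s+1, 1}). -/
import Mathlib


/-- `bprod x [t_m, ..., t_1]` is the product `x'_{t_m t_{m-1}} ⋯ x'_{t_2 t_1}` of consecutive
band generators, where `x'_{uv} := x (max u v) (min u v)`. -/
def bprod {G : Type*} [Group G] (x : ℕ → ℕ → G) : List ℕ → G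
  | [] => 1
  | [_] => 1
  | a :: b :: l => x (max a b) (min a b) * bprod x (b :: l)

/-- The descending list `[a, a-1, ..., b]` (empty if `a < b`). -/
def descList (a b : ℕ) : List ℕ := (List.range (a + 1 - b)).map (fun i => a - i)

theorem descList_succ_one (k : ℕ) : descList (k+1) 1 = (k+1) :: descList k 1 := by
  unfold descList
  have hf : ((fun i => k + 1 - i) ∘ Nat.succ) = (fun i => k - i) := by
    funext i
    simp only [Function.comp_apply]
    omega
  rw [show k + 1 + 1 - 1 = k + 1 from rfl, show k + 1 - 1 = k from rfl,
    List.range_succ_eq_map, List.map_cons, List.map_map, hf, Nat.sub_zero]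

theorem bprod_descList_succ {G : Type*} [Group G] (x : ℕ → ℕ → G) (k : ℕ) (hk : 1 ≤ k) :
    bprod x (descList (k+1) 1) = x (k+1) k * bprod x (descList k 1) := by
  match k, hk with
  | (j+1), _ =>
    rw [descList_succ_one (j+1), descList_succ_one j, bprod, ← descList_succ_one j]
    congr 2 <;> omega

theorem bprod_descList_zero {G : Type*} [Group G] (x : ℕ → ℕ → G) :
    bprod x (descList 0 1) = 1 := by simp [descList, bprod]

theorem bprod_descList_one {G : Type*} [Group G] (x : ℕ → ℕ → G) :
    bprod x (descList 1 1) = 1 := by simp [descList, List.range_succ, bprod]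

private theorem neg4 (a b c d : ℤ) (ha : a < 0) (hb : b < 0) (hc : c < 0) (hd : d < 0) :
    0 < a * b * c * d :=
  mul_pos_of_neg_of_neg (mul_neg_of_pos_of_neg (mul_pos_of_neg_of_neg ha hb) hc) hd

private theorem pos4 (a b c d : ℤ) (ha : 0 < a) (hb : 0 < b) (hc : 0 < c) (hd : 0 < d) :
    0 < a * b * c * d := by positivity

theorem bkl_delta_shift {G : Type*} [Group G] (n : ℕ) (x : ℕ → ℕ → G)
    (hcomm : ∀ t s r q : ℕ, t ≤ n → s < t → 1 ≤ s → r ≤ n → q < r → 1 ≤ q →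
      0 < ((t : ℤ) - r) * ((t : ℤ) - q) * ((s : ℤ) - r) * ((s : ℤ) - q) →
      x t s * x r q = x r q * x t s)
    (hband1 : ∀ t s r : ℕ, t ≤ n → s < t → r < s → 1 ≤ r →
      x t s * x s r = x t r * x t s)
    (hband2 : ∀ t s r : ℕ, t ≤ n → s < t → r < s → 1 ≤ r →
      x t r * x t s = x s r * x t r) :
    ∀ t s : ℕ, t ≤ n → s < t → 1 ≤ s →
      x t s * bprod x (descList n 1) =
        bprod x (descList n 1) * (if t = n then x (s + 1) 1 else x (t + 1) (s + 1)) := by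
  have cyc3 : ∀ t s r : ℕ, t ≤ n → s < t → r < s → 1 ≤ r →
      x t s * x s r = x s r * x t r := fun a b c h1 h2 h3 h4 =>
    (hband1 a b c h1 h2 h3 h4).trans (hband2 a b c h1 h2 h3 h4)
  -- L1 : x t s commutes with bprod x (descList m 1) when m < s
  have L1 : ∀ m t s : ℕ, t ≤ n → s < t → 1 ≤ s → m < s →
      x t s * bprod x (descList m 1) = bprod x (descList m 1) * x t s := by
    intro m
    induction m with
    | zero => intro t s _ _ _ _; rw [bprod_descList_zero, mul_one, one_mul]
    | succ j ihj =>
      intro t s h1 h2 h3 h4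
      match j, ihj with
      | 0, _ => rw [bprod_descList_one, mul_one, one_mul]
      | (i+1), ihj =>
        rw [bprod_descList_succ x (i+1) (by omega), ← mul_assoc,
          hcomm t s (i+2) (i+1) h1 h2 h3 (by omega) (by omega) (by omega)
            (pos4 _ _ _ _ (by omega) (by omega) (by omega) (by omega)),
          mul_assoc, ihj t s h1 h2 h3 (by omega), ← mul_assoc]
  -- L2 : telescoping x t m past bprod x (descList m 1)
  have L2 : ∀ m t : ℕ, t ≤ n → m < t → 1 ≤ m →
      x t m * bprod x (descList m 1) = bprod x (descList m 1) * x t 1 := by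
    intro m
    induction m with
    | zero => intro t _ _ h; omega
    | succ j ihj =>
      intro t h1 h2 _
      by_cases hj : j = 0
      · subst hj; rw [bprod_descList_one, mul_one, one_mul]
      · rw [bprod_descList_succ x j (by omega), ← mul_assoc,
          cyc3 t (j+1) j h1 h2 (by omega) (by omega),
          mul_assoc, ihj t h1 (by omega) (by omega), ← mul_assoc]
  -- L3 : shift of a consecutive generator x (s+1) s
  have L3 : ∀ s : ℕ, 1 ≤ s → ∀ m : ℕ, s + 2 ≤ m → m ≤ n →
      x (s+1) s * bprod x (descList m 1) = bprod x (descList m 1) * x (s+2) (s+1) := by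
    intro s hs m
    induction m with
    | zero => intro h _; omega
    | succ j ihj =>
      intro hm2 hmn
      rcases Nat.lt_or_ge j (s+2) with hj | hj
      · -- base case : j = s + 1
        have hj' : j = s + 1 := by omega
        subst hj'
        rw [bprod_descList_succ x (s+1) (by omega), bprod_descList_succ x s hs]
        have e1 : x (s+2) (s+1) * x (s+1) s = x (s+2) s * x (s+2) (s+1) :=
          hband1 (s+2) (s+1) s (by omega) (by omega) (by omega) hs
        have e2 : x (s+2) (s+1) * x (s+1) s = x (s+1) s * x (s+2) s :=
          cyc3 (s+2) (s+1) s (by omega) (by omega) (by omega) hs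
        have commD : x (s+2) (s+1) * bprod x (descList s 1)
            = bprod x (descList s 1) * x (s+2) (s+1) :=
          L1 s (s+2) (s+1) (by omega) (by omega) (by omega) (by omega)
        have braid : x (s+1) s * (x (s+2) (s+1) * x (s+1) s)
            = x (s+2) (s+1) * x (s+1) s * x (s+2) (s+1) := by
          calc x (s+1) s * (x (s+2) (s+1) * x (s+1) s)
              = x (s+1) s * (x (s+2) s * x (s+2) (s+1)) := by rw [e1]
            _ = (x (s+1) s * x (s+2) s) * x (s+2) (s+1) := by rw [mul_assoc]
            _ = (x (s+2) (s+1) * x (s+1) s) * x (s+2) (s+1) := by rw [← e2]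
        calc x (s+1) s * (x (s+2) (s+1) * (x (s+1) s * bprod x (descList s 1)))
            = (x (s+1) s * (x (s+2) (s+1) * x (s+1) s)) * bprod x (descList s 1) := by
              rw [mul_assoc, mul_assoc]
          _ = (x (s+2) (s+1) * x (s+1) s * x (s+2) (s+1)) * bprod x (descList s 1) := by
              rw [braid]
          _ = (x (s+2) (s+1) * x (s+1) s) * (x (s+2) (s+1) * bprod x (descList s 1)) := by
              rw [mul_assoc]
          _ = (x (s+2) (s+1) * x (s+1) s) * (bprod x (descList s 1) * x (s+2) (s+1)) := by
              rw [commD]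
          _ = x (s+2) (s+1) * (x (s+1) s * bprod x (descList s 1)) * x (s+2) (s+1) := by
              rw [mul_assoc, mul_assoc, mul_assoc]
      · -- step case : j ≥ s + 2
        rw [bprod_descList_succ x j (by omega), ← mul_assoc,
          hcomm (s+1) s (j+1) j (by omega) (by omega) hs (by omega) (by omega) (by omega)
            (neg4 _ _ _ _ (by omega) (by omega) (by omega) (by omega)),
          mul_assoc, ihj (by omega) (by omega), ← mul_assoc]
  -- main induction on the gap d = t - s - 1
  have key : ∀ d t s : ℕ, t ≤ n → s < t → 1 ≤ s → t = s + 1 + d →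
      x t s * bprod x (descList n 1) =
        bprod x (descList n 1) * (if t = n then x (s + 1) 1 else x (t + 1) (s + 1)) := by
    intro d
    induction d using Nat.strong_induction_on with
    | _ d ih =>
      intro t s h1 h2 h3 h4
      rcases Nat.eq_zero_or_pos d with hd | hd
      · -- consecutive case t = s + 1
        have hts : t = s + 1 := by omega
        subst hts
        by_cases htn : s + 1 = n
        · rw [if_pos htn, ← htn, bprod_descList_succ x s h3]
          have hL2 := L2 s (s+1) (by omega) (by omega) h3
          rw [hL2, ← mul_assoc, hL2]
        · rw [if_neg htn]
          exact L3 s h3 n (by omega) le_rfl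
      · -- t ≥ s + 2
        have h5 : s + 2 ≤ t := by omega
        have hA := ih 0 (by omega) t (t-1) h1 (by omega) (by omega) (by omega)
        have hB := ih (d-1) (by omega) (t-1) s (by omega) (by omega) h3 (by omega)
        have htn1 : ¬ (t - 1 = n) := by omega
        rw [if_neg htn1] at hB
        have ht1 : t - 1 + 1 = t := by omega
        rw [ht1] at hA hB
        have hb : x t (t-1) * x (t-1) s = x t s * x t (t-1) :=
          hband1 t (t-1) s h1 (by omega) (by omega) h3
        set A := (if t = n then x t 1 else x (t+1) t) with hAdef
        set R := (if t = n then x (s+1) 1 else x (t+1) (s+1)) with hRdef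
        have hRA : A * x t (s+1) = R * A := by
          by_cases htn : t = n
          · simp only [hAdef, hRdef, if_pos htn]
            subst htn
            exact hband2 t (s+1) 1 le_rfl (by omega) (by omega) le_rfl
          · simp only [hAdef, hRdef, if_neg htn]
            exact hband1 (t+1) t (s+1) (by omega) (by omega) (by omega) (by omega)
        have cancel : x t s * bprod x (descList n 1) * A
            = bprod x (descList n 1) * R * A := by
          calc x t s * bprod x (descList n 1) * A
              = x t s * (bprod x (descList n 1) * A) := by rw [mul_assoc]
            _ = x t s * (x t (t-1) * bprod x (descList n 1)) := by rw [← hA]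
            _ = (x t s * x t (t-1)) * bprod x (descList n 1) := by rw [mul_assoc]
            _ = (x t (t-1) * x (t-1) s) * bprod x (descList n 1) := by rw [← hb]
            _ = x t (t-1) * (x (t-1) s * bprod x (descList n 1)) := by rw [mul_assoc]
            _ = x t (t-1) * (bprod x (descList n 1) * x t (s+1)) := by rw [hB]
            _ = (x t (t-1) * bprod x (descList n 1)) * x t (s+1) := by rw [mul_assoc]
            _ = (bprod x (descList n 1) * A) * x t (s+1) := by rw [hA]
            _ = bprod x (descList n 1) * (A * x t (s+1)) := by rw [mul_assoc]
            _ = bprod x (descList n 1) * (R * A) := by rw [hRA]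
            _ = bprod x (descList n 1) * R * A := by rw [mul_assoc]
        exact mul_right_cancel cancel
  intro t s ht hst hs
  exact key (t - s - 1) t s ht hst hs (by omega)
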